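/- Let 0<ν<1 and μ>0. Define the scalar sequence U^0=1 and, for n≥1, (1+β₀μ)U^n = U^{n-1} − μ Σ_{j=1}^{n-1} β_{n-j} U^j. Let ψ(z) = Γ(1+ν)^{-1}(1 + Σ_{n=1}^∞ ((n+1)^ν − n^ν) e^{-nz}). Then for every a>0 and every n≥1, U^n = (1/(2π)) ∫_{−π}^{π} e^{n(a+iy)} / ((1 + μψ(a+iy))(e^{a+iy} − 1)) dy, where the integral is over the real variable y∈[−π,π]. -/

import Mathlib

/-- DG weights: `β₀ = 1/Γ(1+ν)`, `β_j = ((j+1)^ν − 2j^ν + (j−1)^ν)/Γ(1+ν)` for `j ≥ 1`. -/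
noncomputable def dgBeta (ν : ℝ) : ℕ → ℝ
  | 0 => 1 / Real.Gamma (1 + ν)
  | j + 1 => (((j : ℝ) + 2) ^ ν - 2 * ((j : ℝ) + 1) ^ ν + (j : ℝ) ^ ν) / Real.Gamma (1 + ν)

/-- The generating function `ψ(z) = Γ(1+ν)⁻¹ (1 + Σ_{n=1}^∞ ((n+1)^ν − n^ν) e^{-nz})`. -/
noncomputable def psiSeries (ν : ℝ) (z : ℂ) : ℂ :=
  ((1 / Real.Gamma (1 + ν) : ℝ) : ℂ) *
    (1 + ∑' n : ℕ, ((((n : ℝ) + 2) ^ ν - ((n : ℝ) + 1) ^ ν : ℝ) : ℂ)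
        * Complex.exp (-(((n : ℕ) + 1 : ℕ) : ℂ) * z))

namespace Stmt18Aux

noncomputable def b (ν : ℝ) (k : ℕ) : ℝ := ((k : ℝ) + 1) ^ ν - (k : ℝ) ^ ν

lemma b_zero (ν : ℝ) (hν0 : 0 < ν) : b ν 0 = 1 := by
  simp [b, Real.zero_rpow hν0.ne', Real.one_rpow]

lemma b_nonneg (ν : ℝ) (hν0 : 0 < ν) (k : ℕ) : 0 ≤ b ν k := by
  have := Real.rpow_le_rpow (x := (k : ℝ)) (y := (k : ℝ) + 1) (by positivity) (by linarith) hν0.le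
  simpa [b] using sub_nonneg.mpr this

lemma b_anti (ν : ℝ) (hν0 : 0 < ν) (hν1 : ν < 1) (k : ℕ) : b ν (k + 1) ≤ b ν k := by
  have hcc := Real.concaveOn_rpow hν0.le hν1.le
  have h := hcc.2 (Set.mem_Ici.mpr (show (0:ℝ) ≤ (k:ℝ) by positivity))
    (Set.mem_Ici.mpr (show (0:ℝ) ≤ (k:ℝ)+2 by positivity))
    (show (0:ℝ) ≤ 1/2 by norm_num) (show (0:ℝ) ≤ 1/2 by norm_num)
    (show (1/2:ℝ) + 1/2 = 1 by norm_num)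
  have hmid : (1/2 : ℝ) • (k : ℝ) + (1/2 : ℝ) • ((k : ℝ) + 2) = (k : ℝ) + 1 := by
    simp; ring
  rw [hmid] at h
  simp only [smul_eq_mul] at h
  simp only [b]
  push_cast
  have h2 : ((k:ℝ) + 1 + 1) = (k:ℝ) + 2 := by ring
  rw [h2]
  linarith

lemma b_le_one (ν : ℝ) (hν0 : 0 < ν) (hν1 : ν < 1) (k : ℕ) : b ν k ≤ 1 := by
  have : b ν k ≤ b ν 0 := by
    induction k with
    | zero => exact le_refl _
    | succ m ih => exact le_trans (b_anti ν hν0 hν1 m) ih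
  rw [b_zero ν hν0] at this; exact this

lemma Gamma_pos (ν : ℝ) (hν0 : 0 < ν) : 0 < Real.Gamma (1 + ν) :=
  Real.Gamma_pos_of_pos (by linarith)

lemma dgBeta_succ (ν : ℝ) (k : ℕ) :
    dgBeta ν (k + 1) = (b ν (k + 1) - b ν k) / Real.Gamma (1 + ν) := by
  simp only [dgBeta, b]
  push_cast
  ring_nf

lemma abs_dgBeta_le (ν : ℝ) (hν0 : 0 < ν) (hν1 : ν < 1) (k : ℕ) :
    |dgBeta ν k| ≤ 1 / Real.Gamma (1 + ν) := by
  have hΓ := Gamma_pos ν hν0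
  match k with
  | 0 => simp [dgBeta]; rw [abs_of_pos (by positivity)]
  | k + 1 =>
    rw [dgBeta_succ, abs_div, abs_of_pos hΓ, div_le_div_iff_of_pos_right hΓ] -- maybe wrong name
    rw [abs_sub_comm, abs_of_nonneg (sub_nonneg.mpr (b_anti ν hν0 hν1 k))]
    have := b_nonneg ν hν0 (k+1)
    have := b_le_one ν hν0 hν1 k
    linarith


/-- coefficients of the denominator power series -/
noncomputable def cseq (ν μ : ℝ) (k : ℕ) : ℝ :=
  μ * dgBeta ν k + (if k = 0 then 1 else 0) - (if k = 1 then 1 else 0)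

lemma sum_abs_dgBeta_succ_le (ν : ℝ) (hν0 : 0 < ν) (hν1 : ν < 1) (m : ℕ) :
    ∑ i ∈ Finset.range m, |dgBeta ν (i + 1)| ≤ 1 / Real.Gamma (1 + ν) := by
  have hΓ := Gamma_pos ν hν0
  have h1 : ∀ i, |dgBeta ν (i + 1)| = (b ν i - b ν (i + 1)) / Real.Gamma (1 + ν) := by
    intro i
    rw [dgBeta_succ, abs_div, abs_of_pos hΓ, abs_sub_comm,
      abs_of_nonneg (sub_nonneg.mpr (b_anti ν hν0 hν1 i))]
  calc ∑ i ∈ Finset.range m, |dgBeta ν (i + 1)|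
      = ∑ i ∈ Finset.range m, ((b ν i - b ν (i + 1)) / Real.Gamma (1 + ν)) := by
        exact Finset.sum_congr rfl fun i _ => h1 i
    _ = (∑ i ∈ Finset.range m, (b ν i - b ν (i + 1))) / Real.Gamma (1 + ν) := by
        rw [Finset.sum_div]
    _ = (b ν 0 - b ν m) / Real.Gamma (1 + ν) := by rw [Finset.sum_range_sub' (b ν) m]
    _ ≤ 1 / Real.Gamma (1 + ν) := by
        gcongr
        rw [b_zero ν hν0]
        linarith [b_nonneg ν hν0 m]

lemma sum_abs_dgBeta_rev_le (ν : ℝ) (hν0 : 0 < ν) (hν1 : ν < 1) (m : ℕ) :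
    ∑ j ∈ Finset.Icc 1 m, |dgBeta ν (m + 1 - j)| ≤ 1 / Real.Gamma (1 + ν) := by
  have h : ∑ j ∈ Finset.Icc 1 m, |dgBeta ν (m + 1 - j)|
      = ∑ i ∈ Finset.range m, |dgBeta ν (m - i)| := by
    rw [show Finset.Icc 1 m = Finset.Ico 1 (m + 1) by rfl, Finset.sum_Ico_eq_sum_range]
    simp only [Nat.add_sub_cancel]
    exact Finset.sum_congr rfl fun i hi => by
      have h4 : m + 1 - (1 + i) = m - i := by omega
      rw [h4]
  rw [h]
  have h2 : ∑ i ∈ Finset.range m, |dgBeta ν (m - i)|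
      = ∑ i ∈ Finset.range m, |dgBeta ν (i + 1)| := by
    rw [← Finset.sum_range_reflect (fun j => |dgBeta ν (j + 1)|) m]
    exact Finset.sum_congr rfl fun i hi => by
      have hi' := Finset.mem_range.mp hi
      have h4 : m - i = m - 1 - i + 1 := by omega
      rw [h4]
  rw [h2]
  exact sum_abs_dgBeta_succ_le ν hν0 hν1 m

lemma U_abs_le (ν : ℝ) (hν0 : 0 < ν) (hν1 : ν < 1) (μ : ℝ) (hμ : 0 < μ)
    (U : ℕ → ℝ) (hU0 : U 0 = 1)
    (hUrec : ∀ n : ℕ, 1 ≤ n →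
      (1 + dgBeta ν 0 * μ) * U n
        = U (n - 1) - μ * ∑ j ∈ Finset.Icc 1 (n - 1), dgBeta ν (n - j) * U j) :
    ∀ m, |U m| ≤ 1 := by
  have hΓ := Gamma_pos ν hν0
  have hβ0 : dgBeta ν 0 = 1 / Real.Gamma (1 + ν) := rfl
  have hden : (0:ℝ) < 1 + dgBeta ν 0 * μ := by
    rw [hβ0]; positivity
  intro m
  induction m using Nat.strong_induction_on with
  | _ m ih =>
    match m with
    | 0 => simp [hU0]
    | Nat.succ p =>
      have hrec := hUrec (p + 1) (Nat.le_add_left 1 p)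
      simp only [Nat.add_sub_cancel] at hrec
      have hb : |(1 + dgBeta ν 0 * μ) * U (p + 1)| ≤ 1 + dgBeta ν 0 * μ := by
        rw [hrec]
        have h1 : |U p - μ * ∑ j ∈ Finset.Icc 1 p, dgBeta ν (p + 1 - j) * U j|
            ≤ |U p| + μ * ∑ j ∈ Finset.Icc 1 p, |dgBeta ν (p + 1 - j)| * |U j| := by
          refine (abs_sub _ _).trans ?_
          gcongr
          · rw [abs_mul, abs_of_pos hμ]
            gcongr
            refine (Finset.abs_sum_le_sum_abs _ _).trans ?_
            refine le_of_eq (Finset.sum_congr rfl fun j _ => ?_)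
            rw [abs_mul]
        refine h1.trans ?_
        have h2 : ∑ j ∈ Finset.Icc 1 p, |dgBeta ν (p + 1 - j)| * |U j|
            ≤ ∑ j ∈ Finset.Icc 1 p, |dgBeta ν (p + 1 - j)| := by
          apply Finset.sum_le_sum
          intro j hj
          have hUj := ih j (by
            have := (Finset.mem_Icc.mp hj).2
            omega)
          nlinarith [abs_nonneg (dgBeta ν (p + 1 - j))]
        have h3 := (h2.trans (sum_abs_dgBeta_rev_le ν hν0 hν1 p))
        have hUp := ih p (Nat.lt_succ_self p)
        rw [hβ0]
        nlinarith
      rw [abs_mul, abs_of_pos hden] at hb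
      calc |U (p+1)| = (1 + dgBeta ν 0 * μ) * |U (p+1)| / (1 + dgBeta ν 0 * μ) := by
              field_simp
        _ ≤ (1 + dgBeta ν 0 * μ) / (1 + dgBeta ν 0 * μ) := by gcongr
        _ = 1 := by field_simp


lemma key_sum (ν μ : ℝ) (U : ℕ → ℝ) (hU0 : U 0 = 1)
    (hUrec : ∀ n : ℕ, 1 ≤ n →
      (1 + dgBeta ν 0 * μ) * U n
        = U (n - 1) - μ * ∑ j ∈ Finset.Icc 1 (n - 1), dgBeta ν (n - j) * U j)
    (n : ℕ) (hn : 1 ≤ n) :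
    ∑ k ∈ Finset.range (n + 1), U k * cseq ν μ (n - k) = μ * dgBeta ν n := by
  obtain ⟨m, rfl⟩ : ∃ m, n = m + 1 := ⟨n - 1, by omega⟩
  have hsplit : ∀ k, U k * cseq ν μ (m + 1 - k)
      = μ * (U k * dgBeta ν (m + 1 - k)) + (if m + 1 - k = 0 then U k else 0)
        - (if m + 1 - k = 1 then U k else 0) := by
    intro k
    simp only [cseq]
    by_cases h0 : m + 1 - k = 0 <;> by_cases h1 : m + 1 - k = 1 <;>
      simp [h0, h1] <;> ring
  rw [Finset.sum_congr rfl fun k _ => hsplit k]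
  rw [Finset.sum_sub_distrib, Finset.sum_add_distrib]
  have hS1 : ∑ k ∈ Finset.range (m + 2), (if m + 1 - k = 0 then U k else 0) = U (m + 1) := by
    rw [Finset.sum_eq_single_of_mem (m + 1) (Finset.self_mem_range_succ (m + 1))]
    · simp
    · intro k hk hne
      have := Finset.mem_range.mp hk
      rw [if_neg (by omega)]
  have hS2 : ∑ k ∈ Finset.range (m + 2), (if m + 1 - k = 1 then U k else 0) = U m := by
    rw [Finset.sum_eq_single_of_mem m (Finset.mem_range.mpr (by omega))]
    · simp
    · intro k hk hne
      have := Finset.mem_range.mp hk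
      rw [if_neg (by omega)]
  have hS3 : ∑ k ∈ Finset.range (m + 2), μ * (U k * dgBeta ν (m + 1 - k))
      = μ * (dgBeta ν (m + 1) + (∑ j ∈ Finset.Icc 1 m, dgBeta ν (m + 1 - j) * U j)
          + dgBeta ν 0 * U (m + 1)) := by
    rw [← Finset.mul_sum]
    congr 1
    rw [Finset.sum_range_succ]
    have e1 : m + 1 - (m + 1) = 0 := by omega
    rw [e1]
    rw [Finset.sum_range_succ']
    have e2 : ∑ i ∈ Finset.range m, U (i + 1) * dgBeta ν (m + 1 - (i + 1))
        = ∑ j ∈ Finset.Icc 1 m, dgBeta ν (m + 1 - j) * U j := by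
      rw [show Finset.Icc 1 m = Finset.Ico 1 (m + 1) by rfl, Finset.sum_Ico_eq_sum_range]
      simp only [Nat.add_sub_cancel]
      exact Finset.sum_congr rfl fun i hi => by
        have e3 : m + 1 - (1 + i) = m + 1 - (i + 1) := by omega
        rw [e3, mul_comm, Nat.one_add]
    rw [e2]
    simp only [Nat.sub_zero, hU0]
    ring
  rw [hS1, hS2, hS3]
  have hrec := hUrec (m + 1) (by omega)
  simp only [Nat.add_sub_cancel] at hrec
  nlinarith [hrec]

/-- summability of coefficient-times-geometric series -/
lemma summable_coeff {r : ℕ → ℝ} {C : ℝ} (hC : ∀ k, |r k| ≤ C) {w : ℂ} (hw : ‖w‖ < 1) :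
    Summable (fun k => ‖((r k : ℝ) : ℂ) * w ^ k‖) := by
  refine Summable.of_nonneg_of_le (fun k => norm_nonneg _) (fun k => ?_)
    ((summable_geometric_of_lt_one (norm_nonneg w) hw).mul_left C)
  rw [norm_mul, norm_pow, Complex.norm_real, Real.norm_eq_abs]
  have h1 : (0:ℝ) ≤ ‖w‖ ^ k := by positivity
  exact mul_le_mul_of_nonneg_right (hC k) h1

lemma psi_eq (ν : ℝ) (z : ℂ) :
    psiSeries ν z = ((Real.Gamma (1 + ν) : ℝ) : ℂ)⁻¹ *
      (1 + ∑' k : ℕ, ((b ν (k + 1) : ℝ) : ℂ) * (Complex.exp (-z)) ^ (k + 1)) := by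
  rw [psiSeries]
  congr 1
  · push_cast
    ring
  congr 1
  refine tsum_congr fun k => ?_
  congr 1
  · rw [b]
    push_cast
    ring_nf
  · rw [← Complex.exp_nat_mul]
    congr 1
    push_cast
    ring


theorem inversion (ν : ℝ) (hν0 : 0 < ν) (hν1 : ν < 1) (μ : ℝ) (hμ : 0 < μ)
    (U : ℕ → ℝ) (hU0 : U 0 = 1)
    (hUrec : ∀ n : ℕ, 1 ≤ n →
      (1 + dgBeta ν 0 * μ) * U n
        = U (n - 1) - μ * ∑ j ∈ Finset.Icc 1 (n - 1), dgBeta ν (n - j) * U j)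
    (z : ℂ) (hz : 0 < z.re) :
    ((1 + (μ : ℂ) * psiSeries ν z) * (Complex.exp z - 1)) *
      (∑' m : ℕ, ((U (m + 1) : ℝ) : ℂ) * (Complex.exp (-z)) ^ (m + 1)) = 1 := by
  have hΓ := Gamma_pos ν hν0
  set w : ℂ := Complex.exp (-z) with hwdef
  have hw : ‖w‖ < 1 := by
    rw [hwdef, Complex.norm_exp]
    rw [Real.exp_lt_one_iff]
    simpa using hz
  have hw0 : w ≠ 0 := Complex.exp_ne_zero _
  -- basic summabilities
  have hUb := U_abs_le ν hν0 hν1 μ hμ U hU0 hUrec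
  have hfs : Summable (fun m => ‖((U m : ℝ) : ℂ) * w ^ m‖) := summable_coeff hUb hw
  have habsc : ∀ k, |cseq ν μ k| ≤ μ * (1 / Real.Gamma (1 + ν)) + 1 := by
    intro k
    have h1 := abs_dgBeta_le ν hν0 hν1 k
    rw [cseq]
    have h2 : |μ * dgBeta ν k| ≤ μ * (1 / Real.Gamma (1 + ν)) := by
      rw [abs_mul, abs_of_pos hμ]
      exact mul_le_mul_of_nonneg_left h1 hμ.le
    rcases Nat.lt_or_ge k 2 with hk | hk
    · interval_cases k
      · simp only [if_pos rfl, if_neg (by norm_num : (0:ℕ) ≠ 1), sub_zero]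
        have hβ : dgBeta ν 0 = 1 / Real.Gamma (1 + ν) := rfl
        rw [hβ]
        rw [abs_of_nonneg (by positivity)]
        norm_num
      · have h7 : (if (1:ℕ) = 0 then (1:ℝ) else 0) = 0 := by norm_num
        have h8 : (if (1:ℕ) = 1 then (1:ℝ) else 0) = 1 := by norm_num
        rw [h7, h8, add_zero]
        have h5 := abs_sub (μ * dgBeta ν 1) (1:ℝ)
        have h6 : |(1:ℝ)| = 1 := abs_one
        linarith
    · have hk0 : k ≠ 0 := by omega
      have hk1 : k ≠ 1 := by omega
      simp only [if_neg hk0, if_neg hk1, add_zero, sub_zero]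
      linarith
  have hgs : Summable (fun k => ‖((cseq ν μ k : ℝ) : ℂ) * w ^ k‖) := summable_coeff habsc hw
  have hds : Summable (fun k => ‖((μ * dgBeta ν k : ℝ) : ℂ) * w ^ k‖) := by
    refine summable_coeff (C := μ * (1 / Real.Gamma (1 + ν))) (fun k => ?_) hw
    rw [abs_mul, abs_of_pos hμ]
    exact mul_le_mul_of_nonneg_left (abs_dgBeta_le ν hν0 hν1 k) hμ.le
  have hbs : Summable (fun k => ‖((b ν (k + 1) : ℝ) : ℂ) * w ^ (k + 1)‖) := by
    have : Summable (fun k => ‖((b ν k : ℝ) : ℂ) * w ^ k‖) := by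
      refine summable_coeff (C := 1) (fun k => ?_) hw
      rw [abs_of_nonneg (b_nonneg ν hν0 k)]
      exact b_le_one ν hν0 hν1 k
    exact (summable_nat_add_iff 1).mpr this
  have hds0 : Summable (fun k => ‖((dgBeta ν k : ℝ) : ℂ) * w ^ k‖) :=
    summable_coeff (abs_dgBeta_le ν hν0 hν1) hw
  -- D and its HasSum
  set D : ℂ := ∑' k : ℕ, ((dgBeta ν k : ℝ) : ℂ) * w ^ k with hDdef
  have h1 : HasSum (fun k => ((dgBeta ν k : ℝ) : ℂ) * w ^ k) D := hds0.of_norm.hasSum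
  have hind0 : HasSum (fun k : ℕ => (if k = 0 then (1 : ℂ) else 0) * w ^ k) 1 := by
    have he : (fun k : ℕ => (if k = 0 then (1 : ℂ) else 0) * w ^ k)
        = fun k : ℕ => if k = 0 then (1 : ℂ) else 0 := by
      funext k
      by_cases h : k = 0 <;> simp [h]
    rw [he]
    exact hasSum_ite_eq 0 1
  have hind1 : HasSum (fun k : ℕ => (if k = 1 then (1 : ℂ) else 0) * w ^ k) w := by
    have he : (fun k : ℕ => (if k = 1 then (1 : ℂ) else 0) * w ^ k)
        = fun k : ℕ => if k = 1 then w else 0 := by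
      funext k
      by_cases h : k = 1 <;> simp [h]
    rw [he]
    exact hasSum_ite_eq 1 w
  -- G
  have hGsum : HasSum (fun k => ((cseq ν μ k : ℝ) : ℂ) * w ^ k) ((μ : ℂ) * D + 1 - w) := by
    have h2 := ((h1.mul_left (μ : ℂ)).add hind0).sub hind1
    convert h2 using 2 with k
    · rfl
    simp only [cseq]
    by_cases h0 : k = 0 <;> by_cases h3 : k = 1 <;> simp [h0, h3] <;> push_cast <;> ring
  -- Cauchy product
  have hFG : (∑' m : ℕ, ((U m : ℝ) : ℂ) * w ^ m) * ((μ : ℂ) * D + 1 - w)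
      = (μ : ℂ) * D + 1 := by
    rw [← hGsum.tsum_eq, tsum_mul_tsum_eq_tsum_sum_range_of_summable_norm hfs hgs]
    have hinner : ∀ n : ℕ, (∑ k ∈ Finset.range (n + 1),
        (((U k : ℝ) : ℂ) * w ^ k) * (((cseq ν μ (n - k) : ℝ) : ℂ) * w ^ (n - k)))
        = (((μ * dgBeta ν n + if n = 0 then 1 else 0 : ℝ)) : ℂ) * w ^ n := by
      intro n
      have e1 : ∀ k ∈ Finset.range (n + 1),
          (((U k : ℝ) : ℂ) * w ^ k) * (((cseq ν μ (n - k) : ℝ) : ℂ) * w ^ (n - k))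
          = ((U k * cseq ν μ (n - k) : ℝ) : ℂ) * w ^ n := by
        intro k hk
        have hkn : k + (n - k) = n := by
          have := Finset.mem_range.mp hk
          omega
        have hpw : w ^ k * w ^ (n - k) = w ^ n := by rw [← pow_add, hkn]
        push_cast
        rw [← hpw]
        ring
      rw [Finset.sum_congr rfl e1, ← Finset.sum_mul, ← Complex.ofReal_sum]
      rcases Nat.eq_zero_or_pos n with hn0 | hn1
      · subst hn0
        norm_num [cseq, hU0]
      · rw [key_sum ν μ U hU0 hUrec n hn1, if_neg (by omega)]
        norm_num
    rw [tsum_congr hinner]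
    have h3 := (h1.mul_left (μ : ℂ)).add hind0
    have h4 : HasSum (fun n : ℕ =>
        (((μ * dgBeta ν n + if n = 0 then 1 else 0 : ℝ)) : ℂ) * w ^ n) ((μ : ℂ) * D + 1) := by
      convert h3 using 2 with k
      · rfl
      by_cases h0 : k = 0 <;>
        simp only [h0, if_pos, if_neg, reduceIte] <;> push_cast <;> ring
    exact h4.tsum_eq
  -- split off the m = 0 term
  have hsplitF : (∑' m : ℕ, ((U m : ℝ) : ℂ) * w ^ m)
      = 1 + ∑' m : ℕ, ((U (m + 1) : ℝ) : ℂ) * w ^ (m + 1) := by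
    rw [Summable.tsum_eq_zero_add hfs.of_norm]
    simp [hU0]
  set S : ℂ := ∑' m : ℕ, ((U (m + 1) : ℝ) : ℂ) * w ^ (m + 1) with hSdef
  have hSG : S * ((μ : ℂ) * D + 1 - w) = w := by
    have : (1 + S) * ((μ : ℂ) * D + 1 - w) = (μ : ℂ) * D + 1 := by
      rw [← hsplitF]; exact hFG
    ring_nf at this ⊢
    linear_combination this
  -- identify D with (1 - w) * psi
  have hΓ0 : ((Real.Gamma (1 + ν) : ℝ) : ℂ) ≠ 0 := by
    exact_mod_cast hΓ.ne'
  have hB : HasSum (fun k => ((b ν (k + 1) : ℝ) : ℂ) * w ^ (k + 1))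
      (∑' k : ℕ, ((b ν (k + 1) : ℝ) : ℂ) * w ^ (k + 1)) := hbs.of_norm.hasSum
  set B : ℂ := ∑' k : ℕ, ((b ν (k + 1) : ℝ) : ℂ) * w ^ (k + 1) with hBdef
  have hball : Summable (fun k => ‖((b ν k : ℝ) : ℂ) * w ^ k‖) := by
    refine summable_coeff (C := 1) (fun k => ?_) hw
    rw [abs_of_nonneg (b_nonneg ν hν0 k)]
    exact b_le_one ν hν0 hν1 k
  have hballt : (∑' k : ℕ, ((b ν k : ℝ) : ℂ) * w ^ k) = 1 + B := by
    rw [Summable.tsum_eq_zero_add hball.of_norm]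
    simp [b_zero ν hν0]
    rfl
  have hbshift : HasSum (fun k => ((b ν k : ℝ) : ℂ) * w ^ (k + 1)) (w * (1 + B)) := by
    have h5 := (hball.of_norm.hasSum).mul_left w
    rw [hballt] at h5
    convert h5 using 2 with k
    · rfl
    ring
  have hGD : ((Real.Gamma (1 + ν) : ℝ) : ℂ) * D = (1 - w) * (1 + B) := by
    have h6 : HasSum (fun k => ((Real.Gamma (1 + ν) : ℝ) : ℂ) * (((dgBeta ν k : ℝ) : ℂ) * w ^ k))
        (((Real.Gamma (1 + ν) : ℝ) : ℂ) * D) := h1.mul_left _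
    have h7 := h6.tsum_eq
    rw [Summable.tsum_eq_zero_add h6.summable] at h7
    have h8 : ((Real.Gamma (1 + ν) : ℝ) : ℂ) * (((dgBeta ν 0 : ℝ) : ℂ) * w ^ 0) = 1 := by
      have hβ : dgBeta ν 0 = 1 / Real.Gamma (1 + ν) := rfl
      rw [hβ, pow_zero]
      push_cast
      field_simp
    rw [h8] at h7
    have h9 : (∑' k : ℕ, ((Real.Gamma (1 + ν) : ℝ) : ℂ)
          * (((dgBeta ν (k + 1) : ℝ) : ℂ) * w ^ (k + 1)))
        = B - w * (1 + B) := by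
      have h10 : HasSum (fun k => ((b ν (k + 1) : ℝ) : ℂ) * w ^ (k + 1)
          - ((b ν k : ℝ) : ℂ) * w ^ (k + 1)) (B - w * (1 + B)) := hB.sub hbshift
      rw [← h10.tsum_eq]
      refine tsum_congr fun k => ?_
      rw [dgBeta_succ]
      push_cast
      field_simp
    rw [h9] at h7
    rw [← h7]
    ring
  have hpsiD : D = (1 - w) * psiSeries ν z := by
    have hpsi := psi_eq ν z
    rw [← hwdef] at hpsi
    rw [← hBdef] at hpsi
    have h11 : D = ((Real.Gamma (1 + ν) : ℝ) : ℂ)⁻¹ * ((1 - w) * (1 + B)) := by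
      rw [← hGD]
      field_simp
    rw [h11, hpsi]
    ring
  -- assemble
  have hG2 : (μ : ℂ) * D + 1 - w = (1 - w) * (1 + (μ : ℂ) * psiSeries ν z) := by
    rw [hpsiD]; ring
  rw [hG2] at hSG
  have hezw : Complex.exp z * w = 1 := by
    rw [hwdef, ← Complex.exp_add]
    simp
  have hez1 : Complex.exp z - 1 = Complex.exp z * (1 - w) := by
    rw [mul_sub, hezw, mul_one]
  rw [hez1]
  calc (1 + (μ : ℂ) * psiSeries ν z) * (Complex.exp z * (1 - w)) * S
      = Complex.exp z * (S * ((1 - w) * (1 + (μ : ℂ) * psiSeries ν z))) := by ring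
    _ = Complex.exp z * w := by rw [hSG]
    _ = 1 := hezw


end Stmt18Aux

open Stmt18Aux in
theorem stmt18 (ν : ℝ) (hν0 : 0 < ν) (hν1 : ν < 1) (μ : ℝ) (hμ : 0 < μ)
    (U : ℕ → ℝ) (hU0 : U 0 = 1)
    (hUrec : ∀ n : ℕ, 1 ≤ n →
      (1 + dgBeta ν 0 * μ) * U n
        = U (n - 1) - μ * ∑ j ∈ Finset.Icc 1 (n - 1), dgBeta ν (n - j) * U j)
    (a : ℝ) (ha : 0 < a) (n : ℕ) (hn : 1 ≤ n) :
    (U n : ℂ) = (1 / (2 * Real.pi) : ℝ) *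
      ∫ y in (-Real.pi)..Real.pi,
        Complex.exp ((n : ℂ) * ((a : ℂ) + (y : ℂ) * Complex.I))
          / ((1 + (μ : ℂ) * psiSeries ν ((a : ℂ) + (y : ℂ) * Complex.I))
              * (Complex.exp ((a : ℂ) + (y : ℂ) * Complex.I) - 1)) := by
  have hπ := Real.pi_pos
  have hUb := U_abs_le ν hν0 hν1 μ hμ U hU0 hUrec
  -- the term functions
  set g : ℕ → ℝ → ℂ := fun m y =>
    ((U (m + 1) : ℝ) : ℂ) *
      Complex.exp (((n : ℂ) - ((m : ℂ) + 1)) * ((a : ℂ) + (y : ℂ) * Complex.I)) with hgdef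
  -- step 1: the integrand equals the tsum of g
  have hintegrand : ∀ y : ℝ,
      Complex.exp ((n : ℂ) * ((a : ℂ) + (y : ℂ) * Complex.I))
          / ((1 + (μ : ℂ) * psiSeries ν ((a : ℂ) + (y : ℂ) * Complex.I))
              * (Complex.exp ((a : ℂ) + (y : ℂ) * Complex.I) - 1))
        = ∑' m : ℕ, g m y := by
    intro y
    set z : ℂ := (a : ℂ) + (y : ℂ) * Complex.I with hzdef
    have hzre : 0 < z.re := by
      simp [hzdef, Complex.add_re, Complex.ofReal_re, Complex.mul_re, Complex.I_re,
        Complex.ofReal_im, Complex.I_im, ha]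
    have hinv := inversion ν hν0 hν1 μ hμ U hU0 hUrec z hzre
    set Dz : ℂ := (1 + (μ : ℂ) * psiSeries ν z) * (Complex.exp z - 1) with hDzdef
    set Sz : ℂ := ∑' m : ℕ, ((U (m + 1) : ℝ) : ℂ) * (Complex.exp (-z)) ^ (m + 1) with hSzdef
    have hDz0 : Dz ≠ 0 := left_ne_zero_of_mul (hinv ▸ one_ne_zero)
    have hinv2 : Dz⁻¹ = Sz := inv_eq_of_mul_eq_one_right hinv
    rw [div_eq_mul_inv, hinv2, hSzdef, ← tsum_mul_left]
    refine tsum_congr fun m => ?_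
    rw [hgdef]
    simp only
    rw [← Complex.exp_nat_mul]
    rw [show ((n : ℂ) - ((m : ℂ) + 1)) * ((a : ℂ) + (y : ℂ) * Complex.I)
        = (n : ℂ) * z + (((m + 1 : ℕ) : ℂ)) * (-z) by push_cast [hzdef]; ring]
    rw [Complex.exp_add]
    ring
  simp_rw [hintegrand]
  -- step 2: swap integral and tsum
  rw [intervalIntegral.integral_of_le (by linarith)]
  have hmeas : ∀ m : ℕ, MeasureTheory.AEStronglyMeasurable (g m)
      (MeasureTheory.volume.restrict (Set.Ioc (-Real.pi) Real.pi)) := by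
    intro m
    apply Continuous.aestronglyMeasurable
    fun_prop
  have hnorm : ∀ m y, ‖g m y‖ = |U (m + 1)| * Real.exp (((n : ℝ) - (m + 1)) * a) := by
    intro m y
    rw [hgdef]
    simp only
    rw [norm_mul, Complex.norm_real, Real.norm_eq_abs]
    congr 1
    rw [show (n : ℂ) - ((m : ℂ) + 1) = ((((n : ℝ) - (m + 1)) : ℝ) : ℂ) by push_cast; ring]
    rw [Complex.norm_exp, Complex.re_ofReal_mul]
    congr 1
    simp [Complex.add_re, Complex.ofReal_re, Complex.mul_re, Complex.I_re,
      Complex.ofReal_im, Complex.I_im]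
  have hbound : ∀ m y, ‖g m y‖ ≤ Real.exp ((n : ℝ) * a) * Real.exp (-a) ^ (m + 1) := by
    intro m y
    rw [hnorm m y, ← Real.exp_nat_mul, ← Real.exp_add]
    have h1 : ((n : ℝ) - (m + 1)) * a = (n : ℝ) * a + (m + 1 : ℕ) * (-a) := by
      push_cast; ring
    rw [h1]
    have := hUb (m + 1)
    nlinarith [Real.exp_pos ((n : ℝ) * a + ((m + 1 : ℕ) : ℝ) * (-a))]
  have hlint : ∑' m : ℕ, ∫⁻ y in Set.Ioc (-Real.pi) Real.pi, ‖g m y‖₊ ≠ ⊤ := by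
    set C : ℕ → ℝ := fun m => Real.exp ((n : ℝ) * a) * Real.exp (-a) ^ (m + 1) with hCdef
    have hC0 : ∀ m, 0 ≤ C m := fun m => by positivity
    have hle : ∀ m : ℕ, (∫⁻ y in Set.Ioc (-Real.pi) Real.pi, ‖g m y‖₊)
        ≤ ENNReal.ofReal (C m * (2 * Real.pi)) := by
      intro m
      have h1 : (∫⁻ y in Set.Ioc (-Real.pi) Real.pi, ‖g m y‖₊)
          ≤ ∫⁻ _ in Set.Ioc (-Real.pi) Real.pi, ENNReal.ofReal (C m) := by
        refine MeasureTheory.lintegral_mono fun y => ?_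
        rw [← enorm_eq_nnnorm, ← ofReal_norm]
        exact ENNReal.ofReal_le_ofReal (hbound m y)
      refine h1.trans ?_
      rw [MeasureTheory.setLIntegral_const, Real.volume_Ioc,
        ← ENNReal.ofReal_mul (hC0 m)]
      apply le_of_eq
      congr 1
      ring
    refine ne_top_of_le_ne_top ?_ (ENNReal.tsum_le_tsum hle)
    have hsum : Summable (fun m : ℕ => C m * (2 * Real.pi)) := by
      have hr : Real.exp (-a) < 1 := by
        rw [Real.exp_lt_one_iff]; linarith
      have h2 : Summable (fun m : ℕ => Real.exp (-a) ^ m) :=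
        summable_geometric_of_lt_one (Real.exp_pos _).le hr
      have h3 : Summable (fun m : ℕ => Real.exp (-a) ^ (m + 1)) :=
        (summable_nat_add_iff 1).mpr h2
      exact (h3.mul_left _).mul_right _
    rw [← ENNReal.ofReal_tsum_of_nonneg (fun m => by positivity) hsum]
    exact ENNReal.ofReal_ne_top
  rw [MeasureTheory.integral_tsum hmeas hlint]
  -- step 3: compute each integral
  have hint : ∀ m : ℕ, (∫ y in Set.Ioc (-Real.pi) Real.pi, g m y)
      = if m = n - 1 then ((U n : ℝ) : ℂ) * (2 * Real.pi) else 0 := by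
    intro m
    rw [← intervalIntegral.integral_of_le (by linarith : -Real.pi ≤ Real.pi)]
    set c : ℂ := (n : ℂ) - ((m : ℂ) + 1) with hcdef
    have hterm : ∀ y : ℝ, g m y
        = (((U (m + 1) : ℝ) : ℂ) * Complex.exp (c * (a : ℂ)))
          * Complex.exp ((c * Complex.I) * (y : ℝ)) := by
      intro y
      rw [hgdef]
      simp only
      rw [show c * ((a : ℂ) + (y : ℂ) * Complex.I)
          = c * (a : ℂ) + (c * Complex.I) * (y : ℂ) by ring]
      rw [Complex.exp_add]
      ring
    simp_rw [hterm]
    rw [intervalIntegral.integral_const_mul]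
    by_cases hm : m = n - 1
    · subst hm
      have hc : c = 0 := by
        rw [hcdef]
        have : ((n - 1 : ℕ) : ℂ) = (n : ℂ) - 1 := by
          push_cast [Nat.cast_sub hn]
          ring
        rw [this]
        ring
      have hmn : n - 1 + 1 = n := by omega
      rw [if_pos rfl, hc, hmn]
      simp only [zero_mul, Complex.exp_zero, mul_one]
      rw [intervalIntegral.integral_const]
      rw [show Real.pi - -Real.pi = 2 * Real.pi by ring]
      rw [Complex.real_smul]
      push_cast
      ring
    · have hne : (n : ℝ) ≠ (m : ℝ) + 1 := by
        intro h
        apply hm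
        have : n = m + 1 := by exact_mod_cast h
        omega
      have hc0 : c ≠ 0 := by
        rw [hcdef, sub_ne_zero]
        exact_mod_cast hne
      have hcI : c * Complex.I ≠ 0 := mul_ne_zero hc0 Complex.I_ne_zero
      rw [integral_exp_mul_complex hcI]
      have hk : Complex.exp (c * Complex.I * (Real.pi : ℂ))
          = Complex.exp (c * Complex.I * ((-Real.pi : ℝ) : ℂ)) := by
        rw [Complex.exp_eq_exp_iff_exists_int]
        refine ⟨(n : ℤ) - ((m : ℤ) + 1), ?_⟩
        rw [hcdef]
        push_cast
        ring
      rw [if_neg hm]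
      rw [show ((-Real.pi : ℝ) : ℂ) = -(Real.pi : ℂ) by push_cast; ring] at hk
      rw [hk]
      simp
  rw [tsum_congr hint, tsum_ite_eq]
  push_cast
  rw [← mul_assoc]
  rw [show ((1 : ℂ) / (2 * (Real.pi : ℂ))) * ((U n : ℝ) : ℂ) * (2 * (Real.pi : ℂ))
      = ((U n : ℝ) : ℂ) * ((2 * (Real.pi : ℂ)) / (2 * (Real.pi : ℂ))) by ring]
  rw [div_self (by
    simp only [ne_eq, mul_eq_zero, not_or]
    exact ⟨two_ne_zero, Complex.ofReal_ne_zero.mpr hπ.ne'⟩), mul_one]
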